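/- arXiv:2503.22928 — 2 statements merged into one kernel-verified Lean document; each statement's English description precedes it below -/
import Mathlib

section
/- Let x_n → x uniformly on compact subsets of [0,∞), where each x_n and x are continuous, and suppose x(t₀) > I_max for some t₀ ≥ 0. If κ_n → ∞ and δ > 0, then ∫₀^∞ κ_n·(max{0, x_n(t) - I_max})²·e^{-δt} dt → ∞. -/
open MeasureTheory Filter

theorem stmt15
    (Imax δ t₀ : ℝ) (hδ : 0 < δ) (ht₀ : 0 ≤ t₀)
    (x : ℕ → ℝ → ℝ) (xl : ℝ → ℝ)
    (hxc : ∀ n, Continuous (x n)) (hxlc : Continuous xl)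
    (hconv : TendstoLocallyUniformlyOn x xl atTop (Set.Ici (0:ℝ)))
    (hviol : xl t₀ > Imax)
    (κ : ℕ → ℝ) (hκpos : ∀ n, 0 < κ n) (hκ : Tendsto κ atTop atTop) :
    Tendsto (fun n => ∫⁻ t in Set.Ici (0:ℝ),
        ENNReal.ofReal (κ n * (max 0 (x n t - Imax))^2 * Real.exp (-δ * t)))
      atTop (nhds ⊤) := by
  -- choose η and ε
  set η : ℝ := (xl t₀ - Imax) / 2 with hη
  have hηpos : 0 < η := by simp [hη]; linarith
  have hopen : IsOpen (xl ⁻¹' Set.Ioi (Imax + η)) := isOpen_Ioi.preimage hxlc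
  have ht₀mem : t₀ ∈ xl ⁻¹' Set.Ioi (Imax + η) := by
    simp only [Set.mem_preimage, Set.mem_Ioi]; simp [hη]; linarith
  obtain ⟨r, hr, hball⟩ := Metric.isOpen_iff.mp hopen t₀ ht₀mem
  set ε : ℝ := r / 2 with hε
  have hεpos : 0 < ε := by positivity
  have hsub : Set.Icc t₀ (t₀ + ε) ⊆ xl ⁻¹' Set.Ioi (Imax + η) := by
    intro t ht
    apply hball
    rw [Metric.mem_ball, Real.dist_eq, abs_lt]
    constructor <;> [linarith [ht.1]; linarith [ht.2]]
  -- uniform convergence on the compact interval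
  have hK : IsCompact (Set.Icc t₀ (t₀ + ε)) := isCompact_Icc
  have hKsub : Set.Icc t₀ (t₀ + ε) ⊆ Set.Ici (0:ℝ) := fun t ht => le_trans ht₀ ht.1
  have hun : TendstoUniformlyOn x xl atTop (Set.Icc t₀ (t₀ + ε)) :=
    (tendstoLocallyUniformlyOn_iff_tendstoUniformlyOn_of_compact hK).mp (hconv.mono hKsub)
  have hev : ∀ᶠ n in atTop, ∀ t ∈ Set.Icc t₀ (t₀ + ε), x n t > Imax + η / 2 := by
    have := Metric.tendstoUniformlyOn_iff.mp hun (η / 2) (by positivity)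
    filter_upwards [this] with n hn t ht
    have h1 : xl t > Imax + η := hsub ht
    have h2 : dist (xl t) (x n t) < η / 2 := hn t ht
    rw [Real.dist_eq, abs_lt] at h2
    linarith [h2.1, h2.2]
  -- lower bound
  set c : ℕ → ℝ := fun n => κ n * (η / 2) ^ 2 * Real.exp (-δ * (t₀ + ε)) with hc
  have hlow : ∀ᶠ n in atTop,
      ENNReal.ofReal (c n * ε) ≤ ∫⁻ t in Set.Ici (0:ℝ),
        ENNReal.ofReal (κ n * (max 0 (x n t - Imax))^2 * Real.exp (-δ * t)) := by
    filter_upwards [hev] with n hn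
    have hstep : ∫⁻ t in Set.Icc t₀ (t₀ + ε), ENNReal.ofReal (c n)
        ≤ ∫⁻ t in Set.Icc t₀ (t₀ + ε),
          ENNReal.ofReal (κ n * (max 0 (x n t - Imax))^2 * Real.exp (-δ * t)) := by
      apply setLIntegral_mono' measurableSet_Icc
      intro t ht
      apply ENNReal.ofReal_le_ofReal
      have h1 : η / 2 ≤ max 0 (x n t - Imax) := by
        have := hn t ht
        rw [le_max_iff]; right; linarith
      have h2 : (η / 2) ^ 2 ≤ (max 0 (x n t - Imax)) ^ 2 := by
        apply pow_le_pow_left₀ (by positivity) h1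
      have h3 : Real.exp (-δ * (t₀ + ε)) ≤ Real.exp (-δ * t) := by
        apply Real.exp_le_exp.mpr
        have := ht.2; nlinarith
      have hκn := (hκpos n).le
      calc c n = κ n * (η / 2) ^ 2 * Real.exp (-δ * (t₀ + ε)) := rfl
        _ ≤ κ n * (max 0 (x n t - Imax)) ^ 2 * Real.exp (-δ * (t₀ + ε)) := by
            apply mul_le_mul_of_nonneg_right _ (Real.exp_pos _).le
            exact mul_le_mul_of_nonneg_left h2 hκn
        _ ≤ κ n * (max 0 (x n t - Imax)) ^ 2 * Real.exp (-δ * t) := by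
            apply mul_le_mul_of_nonneg_left h3; positivity
    calc ENNReal.ofReal (c n * ε)
        = ENNReal.ofReal (c n) * ENNReal.ofReal ε := by
          rw [ENNReal.ofReal_mul (mul_nonneg (mul_nonneg (hκpos n).le (sq_nonneg _)) (Real.exp_pos _).le)]
      _ = ∫⁻ _ in Set.Icc t₀ (t₀ + ε), ENNReal.ofReal (c n) := by
          rw [setLIntegral_const, Real.volume_Icc]
          congr 1; ring_nf
      _ ≤ ∫⁻ t in Set.Icc t₀ (t₀ + ε),
            ENNReal.ofReal (κ n * (max 0 (x n t - Imax))^2 * Real.exp (-δ * t)) := hstep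
      _ ≤ ∫⁻ t in Set.Ici (0:ℝ),
            ENNReal.ofReal (κ n * (max 0 (x n t - Imax))^2 * Real.exp (-δ * t)) :=
          lintegral_mono_set hKsub
  have htop : Tendsto (fun n => ENNReal.ofReal (c n * ε)) atTop (nhds ⊤) := by
    apply ENNReal.tendsto_ofReal_atTop.comp
    have : Tendsto (fun n => κ n * ((η / 2) ^ 2 * Real.exp (-δ * (t₀ + ε)) * ε)) atTop atTop :=
      hκ.atTop_mul_const (by positivity)
    refine this.congr (fun n => by ring)
  rw [ENNReal.tendsto_nhds_top_iff_nat] at htop ⊢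
  intro m
  filter_upwards [htop m, hlow] with n h1 h2
  exact lt_of_lt_of_le h1 h2
end

section
/- On a boundary-maintenance arc where i(t) ≡ I_max on an interval J, the SEIR dynamics force σ·e(t) = γ·I_max for all t in J. If additionally e'(t) = 0 on J, then the suppression control must satisfy h(t) = β - γ/s(t), equivalently the effective reproduction number ((β - h(t))/γ)·s(t) = 1. -/
theorem stmt17
    (β σ γ Imax a b : ℝ) (hσ : 0 < σ) (hγ : 0 < γ) (hImax : 0 < Imax)
    (hab : a < b)
    (h s e i : ℝ → ℝ)
    (hspos : ∀ t ∈ Set.Ioo a b, 0 < s t)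
    (hiconst : ∀ t ∈ Set.Ioo a b, i t = Imax)
    (hid : ∀ t ∈ Set.Ioo a b, HasDerivAt i (σ * e t - γ * i t) t)
    (hed : ∀ t ∈ Set.Ioo a b, HasDerivAt e ((β - h t) * s t * i t - σ * e t) t) :
    (∀ t ∈ Set.Ioo a b, σ * e t = γ * Imax) ∧
    ((∀ t ∈ Set.Ioo a b, (β - h t) * s t * i t - σ * e t = 0) →
      ∀ t ∈ Set.Ioo a b, h t = β - γ / s t ∧ ((β - h t) / γ) * s t = 1) := by
  have key : ∀ t ∈ Set.Ioo a b, σ * e t = γ * Imax := by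
    intro t ht
    have hmem : Set.Ioo a b ∈ nhds t := (isOpen_Ioo).mem_nhds ht
    have heq : i =ᶠ[nhds t] fun _ => Imax :=
      Filter.eventuallyEq_of_mem hmem (fun x hx => hiconst x hx)
    have h0 : HasDerivAt i 0 t := (hasDerivAt_const t Imax).congr_of_eventuallyEq heq
    have := (hid t ht).unique h0
    have hi := hiconst t ht
    rw [hi] at this
    linarith
  refine ⟨key, fun hzero t ht => ?_⟩
  have hs := hspos t ht
  have hi := hiconst t ht
  have h1 := hzero t ht
  have h2 := key t ht
  rw [hi, h2] at h1
  have hβ : (β - h t) * s t = γ := by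
    have hne := hImax.ne'
    have : ((β - h t) * s t - γ) * Imax = 0 := by ring_nf; nlinarith
    rcases mul_eq_zero.mp this with h' | h'
    · linarith
    · exact absurd h' hne
  constructor
  · field_simp [hs.ne'] at hβ ⊢
    linarith
  · field_simp [hγ.ne']
    linarith
end
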